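/- Let I ⊆ ℝ be a nonempty open interval and let f : I → ℝ be twice continuously differentiable with f(x) > 0 and f'(x) > 0 for all x ∈ I. If f satisfies the ordinary differential equation 1 + 3 f(x) f''(x) + f'(x)² = 0 on I, then there exist constants a > 0 and d ∈ ℝ such that for every x ∈ I one has a − f(x)^{2/3} > 0 and x = (−f(x)^{2/3} − 2a) · √(a − f(x)^{2/3}) + d. -/

import Mathlib

/-- constancy helper: zero derivative on an open convex set gives a constant function -/
lemma const_of_hasDerivAt_zero {I : Set ℝ} (hIopen : IsOpen I) (hconv : Convex ℝ I)
    {g : ℝ → ℝ} (hg : ∀ x ∈ I, HasDerivAt g 0 x) {x y : ℝ} (hx : x ∈ I) (hy : y ∈ I) :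
    g x = g y := by
  refine hconv.is_const_of_fderivWithin_eq_zero
    (fun z hz => ((hg z hz).differentiableAt).differentiableWithinAt) (fun z hz => ?_) hx hy
  rw [fderivWithin_of_isOpen hIopen hz, ((hg z hz).hasFDerivAt).fderiv]
  ext
  simp

/-- Theorem 1.1 (second factor): if `f` is positive, increasing, twice continuously
differentiable on a nonempty open interval `I` and satisfies `1 + 3 f f'' + f'^2 = 0`,
then there are constants `a > 0` and `d` such that `a - f(x)^(2/3) > 0` and
`x = (-f(x)^(2/3) - 2a) * sqrt (a - f(x)^(2/3)) + d` on `I`. -/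
theorem stmt_0 (I : Set ℝ) (hIopen : IsOpen I) (hIne : I.Nonempty) (hIord : I.OrdConnected)
    (f : ℝ → ℝ) (hf : ContDiffOn ℝ 2 f I)
    (hfpos : ∀ x ∈ I, 0 < f x) (hf'pos : ∀ x ∈ I, 0 < deriv f x)
    (hode : ∀ x ∈ I, 1 + 3 * f x * deriv (deriv f) x + (deriv f x) ^ 2 = 0) :
    ∃ a : ℝ, 0 < a ∧ ∃ d : ℝ, ∀ x ∈ I,
      0 < a - f x ^ ((2 : ℝ) / 3) ∧
      x = (-(f x ^ ((2 : ℝ) / 3)) - 2 * a) * Real.sqrt (a - f x ^ ((2 : ℝ) / 3)) + d := by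
  obtain ⟨x₀, hx₀⟩ := hIne
  have hconv : Convex ℝ I := hIord.convex
  have hd1 : ∀ x ∈ I, HasDerivAt f (deriv f x) x := fun x hx =>
    ((hf.differentiableOn (by norm_num)).differentiableAt (hIopen.mem_nhds hx)).hasDerivAt
  have hd2 : ∀ x ∈ I, HasDerivAt (deriv f) (deriv (deriv f) x) x := fun x hx =>
    (((hf.deriv_of_isOpen (m := 1) hIopen (by norm_num)).differentiableOn one_ne_zero).differentiableAt
      (hIopen.mem_nhds hx)).hasDerivAt
  -- basic rpow facts
  have hppos : ∀ x ∈ I, 0 < f x ^ ((1:ℝ)/3) := fun x hx =>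
    Real.rpow_pos_of_pos (hfpos x hx) _
  have ht : ∀ x ∈ I, f x ^ ((2:ℝ)/3) = (f x ^ ((1:ℝ)/3)) ^ 2 := by
    intro x hx
    rw [← Real.rpow_natCast (f x ^ ((1:ℝ)/3)) 2, ← Real.rpow_mul (hfpos x hx).le]
    norm_num
  have hf3 : ∀ x ∈ I, f x = (f x ^ ((1:ℝ)/3)) ^ 3 := by
    intro x hx
    rw [← Real.rpow_natCast (f x ^ ((1:ℝ)/3)) 3, ← Real.rpow_mul (hfpos x hx).le]
    norm_num
  have hp1 : ∀ x ∈ I, f x ^ ((2:ℝ)/3 - 1) = (f x ^ ((1:ℝ)/3))⁻¹ := by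
    intro x hx
    rw [show (2:ℝ)/3 - 1 = -(1/3) by norm_num, Real.rpow_neg (hfpos x hx).le]
  -- first integral g = f^{2/3}(1 + f'^2) is constant
  set g : ℝ → ℝ := fun x => f x ^ ((2:ℝ)/3) * (1 + (deriv f x) ^ 2) with hgdef
  have hgd : ∀ x ∈ I, HasDerivAt g 0 x := by
    intro x hx
    have h1 : HasDerivAt (fun y => f y ^ ((2:ℝ)/3))
        (deriv f x * ((2:ℝ)/3) * f x ^ ((2:ℝ)/3 - 1)) x :=
      (hd1 x hx).rpow_const (Or.inl (hfpos x hx).ne')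
    have h2 : HasDerivAt (fun y => 1 + (deriv f y) ^ 2)
        (0 + (2:ℕ) * deriv f x ^ 1 * deriv (deriv f) x) x :=
      (hasDerivAt_const x 1).add ((hd2 x hx).pow 2)
    have h3 := h1.mul h2
    convert h3 using 1
    case e'_4 | e'_5 | e'_8 => rfl
    have hode' := hode x hx
    rw [hp1 x hx]
    rw [hf3 x hx] at hode'
    rw [ht x hx]
    have hpne := (hppos x hx).ne'
    field_simp
    linear_combination (-2 * deriv f x) * hode'
  set a : ℝ := g x₀ with hadef
  have hga : ∀ x ∈ I, g x = a := fun x hx =>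
    const_of_hasDerivAt_zero hIopen hconv hgd hx hx₀
  have hapos : 0 < a := by
    have : 0 < g x₀ := mul_pos (Real.rpow_pos_of_pos (hfpos x₀ hx₀) _) (by positivity)
    simpa [hadef] using this
  -- key positivity
  have key : ∀ x ∈ I, a - f x ^ ((2:ℝ)/3) = (f x ^ ((1:ℝ)/3) * deriv f x) ^ 2 := by
    intro x hx
    have := hga x hx
    simp only [hgdef] at this
    rw [← this, ht x hx]
    ring
  have keypos : ∀ x ∈ I, 0 < a - f x ^ ((2:ℝ)/3) := by
    intro x hx
    rw [key x hx]
    exact pow_pos (mul_pos (hppos x hx) (hf'pos x hx)) 2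
  have hsq : ∀ x ∈ I, Real.sqrt (a - f x ^ ((2:ℝ)/3)) = f x ^ ((1:ℝ)/3) * deriv f x := by
    intro x hx
    rw [key x hx, Real.sqrt_sq (mul_pos (hppos x hx) (hf'pos x hx)).le]
  -- second constancy: x - G x
  set G : ℝ → ℝ := fun x => (-(f x ^ ((2:ℝ)/3)) - 2 * a) * Real.sqrt (a - f x ^ ((2:ℝ)/3))
    with hGdef
  have hHd : ∀ x ∈ I, HasDerivAt (fun y => y - G y) 0 x := by
    intro x hx
    have h1 : HasDerivAt (fun y => f y ^ ((2:ℝ)/3))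
        (deriv f x * ((2:ℝ)/3) * f x ^ ((2:ℝ)/3 - 1)) x :=
      (hd1 x hx).rpow_const (Or.inl (hfpos x hx).ne')
    have hu : HasDerivAt (fun y => a - f y ^ ((2:ℝ)/3))
        (0 - deriv f x * ((2:ℝ)/3) * f x ^ ((2:ℝ)/3 - 1)) x :=
      (hasDerivAt_const x a).sub h1
    have hs : HasDerivAt (fun y => Real.sqrt (a - f y ^ ((2:ℝ)/3)))
        ((0 - deriv f x * ((2:ℝ)/3) * f x ^ ((2:ℝ)/3 - 1)) /
          (2 * Real.sqrt (a - f x ^ ((2:ℝ)/3)))) x :=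
      hu.sqrt (keypos x hx).ne'
    have hl : HasDerivAt (fun y => -(f y ^ ((2:ℝ)/3)) - 2 * a)
        (-(deriv f x * ((2:ℝ)/3) * f x ^ ((2:ℝ)/3 - 1))) x := by
      simpa using (h1.neg).sub_const (2 * a)
    have hG : HasDerivAt G
        (-(deriv f x * ((2:ℝ)/3) * f x ^ ((2:ℝ)/3 - 1)) * Real.sqrt (a - f x ^ ((2:ℝ)/3))
          + (-(f x ^ ((2:ℝ)/3)) - 2 * a) *
            ((0 - deriv f x * ((2:ℝ)/3) * f x ^ ((2:ℝ)/3 - 1)) /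
              (2 * Real.sqrt (a - f x ^ ((2:ℝ)/3))))) x := hl.mul hs
    have hid := (hasDerivAt_id x).sub hG
    convert hid using 1
    case e'_4 | e'_5 | e'_8 => rfl
    have ha2 : a = (f x ^ ((1:ℝ)/3)) ^ 2 * (1 + (deriv f x) ^ 2) := by
      rw [← hga x hx]
      simp only [hgdef]
      rw [ht x hx]
    rw [hsq x hx, hp1 x hx, ht x hx, ha2]
    have hpne := (hppos x hx).ne'
    have hf'ne := (hf'pos x hx).ne'
    field_simp
    ring
  refine ⟨a, hapos, x₀ - G x₀, fun x hx => ⟨keypos x hx, ?_⟩⟩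
  have hc : x - G x = x₀ - G x₀ := const_of_hasDerivAt_zero hIopen hconv hHd hx hx₀
  have : x = G x + (x₀ - G x₀) := by linarith
  simpa [hGdef] using this
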